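/- arXiv:1908.00844 — 3 statements merged into one kernel-verified Lean document; each statement's English description precedes it below -/
import Mathlib

section
/- Let z > -1, λ ∈ (0,1], and suppose Δ satisfies |Δ| ≤ λ·|min{z,1}| and sign(Δ) = sign(min{z,1}). Let b ≥ 0 and p > 0 satisfy b - p = p·z (i.e., b = p(1+z)). Then p·z·Δ ≥ (1/(2λ))·b·Δ^2. -/
theorem progress_claim (z lam Δ b p : ℝ) (hz : -1 < z) (hl0 : 0 < lam) (hl1 : lam ≤ 1)
    (hΔ : |Δ| ≤ lam * |min z 1|) (hsign : Real.sign Δ = Real.sign (min z 1))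
    (hb : 0 ≤ b) (hp : 0 < p) (hbp : b - p = p * z) :
    p * z * Δ ≥ (1 / (2 * lam)) * b * Δ ^ 2 := by
  rcases eq_or_ne Δ 0 with h0 | h0
  · simp [h0]
  have hbe : b = p * (1 + z) := by linarith
  have h2l : (0:ℝ) < 2 * lam := by linarith
  rw [ge_iff_le, div_mul_eq_mul_div, div_mul_eq_mul_div, div_le_iff₀ h2l]
  rcases lt_trichotomy (min z 1) 0 with hm | hm | hm
  · have hz0 : z < 0 := by
      rcases min_lt_iff.mp hm with h | h
      · exact h
      · linarith
    have hmz : min z 1 = z := min_eq_left (by linarith)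
    have hΔ0 : Δ < 0 := by
      rcases lt_trichotomy Δ 0 with h | h | h
      · exact h
      · exact absurd h h0
      · have := hsign; rw [Real.sign_of_pos h, hmz, Real.sign_of_neg hz0] at this; norm_num at this
    rw [hmz, abs_of_neg hΔ0, abs_of_neg hz0] at hΔ
    subst hbe
    nlinarith [mul_pos (neg_pos.mpr hΔ0) (neg_pos.mpr hz0),
      mul_nonneg (mul_nonneg hp.le (by linarith : (0:ℝ) ≤ 1 + z)) (neg_pos.mpr hΔ0).le,
      mul_nonneg (mul_nonneg hl0.le (mul_pos (neg_pos.mpr hΔ0) (neg_pos.mpr hz0)).le)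
        (by linarith : (0:ℝ) ≤ 1 - z),
      mul_nonneg (mul_nonneg (mul_nonneg hp.le (by linarith : (0:ℝ) ≤ 1 + z))
        (neg_pos.mpr hΔ0).le) (by linarith : (0:ℝ) ≤ -(Δ + lam * z))]
  · have hz0 : z = 0 := by
      rcases min_eq_iff.mp hm with ⟨h, _⟩ | ⟨h, _⟩
      · exact h
      · linarith
    rw [hm] at hΔ
    simp at hΔ
    exact absurd hΔ h0
  · have hz0 : 0 < z := lt_of_lt_of_le hm (min_le_left z 1)
    have hΔ0 : 0 < Δ := by
      rcases lt_trichotomy Δ 0 with h | h | h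
      · have := hsign; rw [Real.sign_of_neg h, Real.sign_of_pos hm] at this; norm_num at this
      · exact absurd h h0
      · exact h
    rw [abs_of_pos hΔ0, abs_of_pos hm] at hΔ
    subst hbe
    rcases le_total z 1 with hz1 | hz1
    · rw [min_eq_left hz1] at hΔ
      nlinarith [mul_pos hΔ0 hz0, mul_pos hp hΔ0,
        mul_nonneg (mul_nonneg hl0.le (mul_pos hΔ0 hz0).le) (by linarith : (0:ℝ) ≤ 1 - z),
        mul_nonneg (mul_nonneg (mul_nonneg hp.le (by linarith : (0:ℝ) ≤ 1 + z)) hΔ0.le)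
          (by linarith : (0:ℝ) ≤ lam * z - Δ)]
    · rw [min_eq_right hz1] at hΔ
      nlinarith [mul_pos hΔ0 hz0, mul_pos hp hΔ0,
        mul_nonneg (mul_nonneg hl0.le (mul_pos hΔ0 hz0).le) (by linarith : (0:ℝ) ≤ z - 1),
        mul_nonneg (mul_nonneg (mul_nonneg hp.le (by linarith : (0:ℝ) ≤ 1 + z)) hΔ0.le)
          (by linarith : (0:ℝ) ≤ lam * 1 - Δ)]
end

section
/- Let z ≤ 0, C > 0, x ≥ 0, p > 0, r > 0 with r ≤ p. Define I(p') = z(p' - p) - C·x·(p' - p)^2/p, and suppose the unconstrained maximizer p_opt = p + z·p/(2Cx) (when x > 0) satisfies p_opt ≥ r. Then max over p' of I(p'), which equals z^2·p/(4Cx), is at most (1/2)·z·p·log(r/p). -/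
theorem reserve_case1 (z C x p r : ℝ) (hz : z ≤ 0) (hC : 0 < C) (hx : 0 < x)
    (hp : 0 < p) (hr : 0 < r) (hrp : r ≤ p)
    (hopt : p + z * p / (2 * C * x) ≥ r) :
    z ^ 2 * p / (4 * C * x) ≤ (1 / 2) * z * p * Real.log (r / p) := by
  have hcx : 0 < 2 * C * x := by positivity
  have hlog : Real.log (r / p) ≤ r / p - 1 :=
    Real.log_le_sub_one_of_pos (by positivity)
  have h0 : (r - p) * (2 * C * x) ≤ z * p := by
    have := (le_div_iff₀ hcx).mp (by linarith : r - p ≤ z * p / (2 * C * x))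
    linarith
  have h1 : r / p - 1 ≤ z / (2 * C * x) := by
    rw [div_sub_one hp.ne', div_le_div_iff₀ hp hcx]
    nlinarith
  have hL : Real.log (r / p) ≤ z / (2 * C * x) := hlog.trans h1
  rw [le_div_iff₀ hcx] at hL
  rw [div_le_iff₀ (by positivity : (0:ℝ) < 4 * C * x)]
  nlinarith [mul_le_mul_of_nonpos_left hL
    (mul_nonpos_of_nonpos_of_nonneg hz hp.le)]
end

section
/- Let ε > 0, θ > 0, λ ∈ (0,1], and let p > 0, z ≥ -1, Δ with |Δ| ≤ λ·|min{z,1}| and sign(Δ) = sign(min{z,1}). Then 2ε·p·|Δ| ≤ 2θ·p·z·Δ + 2(λε^2/θ)·p. -/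
theorem error_term_bound (ε θ lam p z Δ : ℝ) (hε : 0 < ε) (hθ : 0 < θ)
    (hl0 : 0 < lam) (hl1 : lam ≤ 1) (hp : 0 < p) (hz : -1 ≤ z)
    (hΔ : |Δ| ≤ lam * |min z 1|) (hsign : Real.sign Δ = Real.sign (min z 1)) :
    2 * ε * p * |Δ| ≤ 2 * θ * p * z * Δ + 2 * (lam * ε ^ 2 / θ) * p := by
  set m := min z 1 with hm
  have hprod : m * Δ = |m| * |Δ| := by
    rcases lt_trichotomy Δ 0 with h | h | h
    · have hsΔ : Real.sign Δ = -1 := Real.sign_of_neg h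
      have hmneg : m < 0 := by
        by_contra hc
        push_neg at hc
        rcases eq_or_lt_of_le hc with he | hl
        · rw [← he, Real.sign_zero, hsΔ] at hsign; norm_num at hsign
        · rw [hsΔ, Real.sign_of_pos hl] at hsign; norm_num at hsign
      rw [abs_of_neg h, abs_of_neg hmneg]; ring
    · simp [h]
    · have hsΔ : Real.sign Δ = 1 := Real.sign_of_pos h
      have hmpos : 0 < m := by
        by_contra hc
        push_neg at hc
        rcases eq_or_lt_of_le hc with he | hl
        · rw [he, Real.sign_zero, hsΔ] at hsign; norm_num at hsign
        · rw [hsΔ, Real.sign_of_neg hl] at hsign; norm_num at hsign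
      rw [abs_of_pos h, abs_of_pos hmpos]
  have hmz : m * Δ ≤ z * Δ := by
    rcases le_or_gt 0 Δ with h | h
    · exact mul_le_mul_of_nonneg_right (min_le_left _ _) h
    · have hsΔ : Real.sign Δ = -1 := Real.sign_of_neg h
      have hmneg : m < 0 := by
        by_contra hc
        push_neg at hc
        rcases eq_or_lt_of_le hc with he | hl
        · rw [← he, Real.sign_zero, hsΔ] at hsign; norm_num at hsign
        · rw [hsΔ, Real.sign_of_pos hl] at hsign; norm_num at hsign
      have hz1 : z ≤ 1 := by
        by_contra hc
        push_neg at hc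
        rw [hm, min_eq_right hc.le] at hmneg
        norm_num at hmneg
      rw [hm, min_eq_left hz1]
  have habs : |Δ| ≥ 0 := abs_nonneg Δ
  rcases le_or_gt ε (θ * |m|) with hcase | hcase
  · have h1 : 2 * ε * p * |Δ| ≤ 2 * θ * p * (|m| * |Δ|) := by
      nlinarith [mul_le_mul_of_nonneg_right hcase (mul_nonneg hp.le habs)]
    have h2 : 2 * θ * p * (m * Δ) ≤ 2 * θ * p * (z * Δ) :=
      mul_le_mul_of_nonneg_left hmz (by positivity)
    rw [hprod] at h2
    have hextra : 0 ≤ 2 * (lam * ε ^ 2 / θ) * p := by positivity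
    nlinarith [h1, h2, hextra]
  · have hΔ2 : |Δ| ≤ lam * (ε / θ) := by
      have hmε : |m| ≤ ε / θ := by
        rw [le_div_iff₀ hθ]; nlinarith
      nlinarith
    have hzd : 0 ≤ z * Δ := le_trans (by rw [hprod]; positivity) hmz
    have hmain : 2 * ε * p * |Δ| ≤ 2 * (lam * ε ^ 2 / θ) * p := by
      calc 2 * ε * p * |Δ| ≤ 2 * ε * p * (lam * (ε / θ)) :=
            mul_le_mul_of_nonneg_left hΔ2 (by positivity)
        _ = 2 * (lam * ε ^ 2 / θ) * p := by ring
    have hpos : 0 ≤ 2 * θ * p * (z * Δ) := mul_nonneg (by positivity) hzd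
    nlinarith [hmain, hpos]
end
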